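/- Define F(x,y) = sqrt((4 h(x) Q(y) - 4 L(x,y)² - 4 ⟨c', y⟩ L(x,y) - ⟨c', y⟩²))/(2h(x)), with Q(y) = ∑ c_{ij} y^i y^j, L(x,y) = ∑ c_{ij} x^i y^j, h(x) = ∑ c_{ij} x^i x^j + ⟨c', x⟩ + c. On the open set where h(x) > 0 and the expression under the square root is positive, F satisfies Hamel's equations: ∑_j y^j ∂²F/∂y^k ∂x^j = ∂F/∂x^k for each k; hence F is projectively flat. -/

import Mathlib

open Finset

/-- Partial derivative of `f` with respect to the `i`-th coordinate at `x`. -/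
noncomputable def pd {n : ℕ} (i : Fin n) (f : (Fin n → ℝ) → ℝ) (x : Fin n → ℝ) : ℝ :=
  deriv (fun t => f (Function.update x i t)) (x i)

/-- Partial derivative with respect to the `i`-th `x`-coordinate. -/
noncomputable def pdx {n : ℕ} (i : Fin n) (f : (Fin n → ℝ) → (Fin n → ℝ) → ℝ)
    (x y : Fin n → ℝ) : ℝ :=
  deriv (fun t => f (Function.update x i t) y) (x i)

/-- Partial derivative with respect to the `i`-th `y`-coordinate. -/
noncomputable def pdy {n : ℕ} (i : Fin n) (f : (Fin n → ℝ) → (Fin n → ℝ) → ℝ)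
    (x y : Fin n → ℝ) : ℝ :=
  deriv (fun t => f x (Function.update y i t)) (y i)

section HamelAux

variable {n : ℕ}

def Qf (C : Fin n → Fin n → ℝ) (y : Fin n → ℝ) : ℝ := ∑ i, ∑ j, C i j * y i * y j
def Lf (C : Fin n → Fin n → ℝ) (x y : Fin n → ℝ) : ℝ := ∑ i, ∑ j, C i j * x i * y j
def Pf (c' : Fin n → ℝ) (y : Fin n → ℝ) : ℝ := ∑ k, c' k * y k
def Uf (C : Fin n → Fin n → ℝ) (k : Fin n) (y : Fin n → ℝ) : ℝ := ∑ m, C k m * y m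

def Sf (C : Fin n → Fin n → ℝ) (c' : Fin n → ℝ) (H : ℝ) (x y : Fin n → ℝ) : ℝ :=
  4 * H * Qf C y - 4 * (Lf C x y) ^ 2 - 4 * Pf c' y * Lf C x y - (Pf c' y) ^ 2

noncomputable def Gf (C : Fin n → Fin n → ℝ) (c' : Fin n → ℝ) (H : ℝ) (j : Fin n)
    (x y : Fin n → ℝ) : ℝ :=
  (4 * ((2 * Uf C j x + c' j) * Qf C y - (2 * Lf C x y + Pf c' y) * Uf C j y) * H
      - 2 * Sf C c' H x y * (2 * Uf C j x + c' j))
    / (4 * H ^ 2 * Real.sqrt (Sf C c' H x y))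

lemma Qf_def (C : Fin n → Fin n → ℝ) (y : Fin n → ℝ) :
    Qf C y = ∑ i, ∑ j, C i j * y i * y j := rfl
lemma Lf_def (C : Fin n → Fin n → ℝ) (x y : Fin n → ℝ) :
    Lf C x y = ∑ i, ∑ j, C i j * x i * y j := rfl
lemma Pf_def (c' : Fin n → ℝ) (y : Fin n → ℝ) : Pf c' y = ∑ k, c' k * y k := rfl

lemma sum_upd (g : Fin n → ℝ → ℝ) (y : Fin n → ℝ) (k : Fin n) (t : ℝ) :
    ∑ i, g i (Function.update y k t i) = (∑ i, g i (y i)) - g k (y k) + g k t := by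
  rw [← Finset.sum_erase_add Finset.univ (fun i => g i (Function.update y k t i))
        (Finset.mem_univ k),
      ← Finset.sum_erase_add Finset.univ (fun i => g i (y i)) (Finset.mem_univ k)]
  have h1 : ∑ i ∈ Finset.univ.erase k, g i (Function.update y k t i)
      = ∑ i ∈ Finset.univ.erase k, g i (y i) :=
    Finset.sum_congr rfl fun i hi => by
      rw [Function.update_of_ne (Finset.ne_of_mem_erase hi)]
  rw [h1, Function.update_self]; ring

lemma Pf_upd (c' : Fin n → ℝ) (y : Fin n → ℝ) (k : Fin n) (t : ℝ) :
    Pf c' (Function.update y k t) = Pf c' y + c' k * (t - y k) := by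
  unfold Pf
  rw [sum_upd (fun i s => c' i * s)]; ring

lemma Uf_upd (C : Fin n → Fin n → ℝ) (j k : Fin n) (y : Fin n → ℝ) (t : ℝ) :
    Uf C j (Function.update y k t) = Uf C j y + C j k * (t - y k) := by
  unfold Uf
  rw [sum_upd (fun m s => C j m * s)]; ring

lemma Lf_updl (C : Fin n → Fin n → ℝ) (x y : Fin n → ℝ) (j : Fin n) (t : ℝ) :
    Lf C (Function.update x j t) y = Lf C x y + Uf C j y * (t - x j) := by
  unfold Lf Uf
  rw [sum_upd (fun i s => ∑ m, C i m * s * y m)]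
  have e : (∑ m, C j m * y m) * (t - x j)
      = (∑ m, C j m * t * y m) - ∑ m, C j m * (x j) * y m := by
    rw [Finset.sum_mul, ← Finset.sum_sub_distrib]
    exact Finset.sum_congr rfl fun m _ => by ring
  rw [e]; ring

lemma Lf_updr (C : Fin n → Fin n → ℝ) (hsym : ∀ i j, C i j = C j i)
    (x y : Fin n → ℝ) (k : Fin n) (t : ℝ) :
    Lf C x (Function.update y k t) = Lf C x y + Uf C k x * (t - y k) := by
  unfold Lf Uf
  have e1 : ∀ i : Fin n, ∑ m, C i m * x i * (Function.update y k t m)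
      = (∑ m, C i m * x i * y m) + C i k * x i * (t - y k) := fun i => by
    rw [sum_upd (fun m s => C i m * x i * s)]; ring
  rw [Finset.sum_congr rfl (fun i _ => e1 i), Finset.sum_add_distrib]
  have e2 : ∑ i, C i k * x i * (t - y k) = (∑ m, C k m * x m) * (t - y k) := by
    rw [Finset.sum_mul]
    exact Finset.sum_congr rfl fun i _ => by rw [hsym i k]
  rw [e2]

lemma Qf_upd (C : Fin n → Fin n → ℝ) (hsym : ∀ i j, C i j = C j i)
    (y : Fin n → ℝ) (k : Fin n) (t : ℝ) :
    Qf C (Function.update y k t)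
      = Qf C y + 2 * Uf C k y * (t - y k) + C k k * (t - y k) ^ 2 := by
  unfold Qf Uf
  have e1 : ∀ i : Fin n, ∑ m, C i m * (Function.update y k t i) * (Function.update y k t m)
      = (∑ m, C i m * (Function.update y k t i) * y m)
        + C i k * (Function.update y k t i) * (t - y k) := fun i => by
    rw [sum_upd (fun m s => C i m * (Function.update y k t i) * s)]; ring
  rw [Finset.sum_congr rfl (fun i _ => e1 i), Finset.sum_add_distrib]
  have e2 : ∑ i, (∑ m, C i m * (Function.update y k t i) * y m)
      = (∑ i, ∑ m, C i m * y i * y m) + (∑ m, C k m * y m) * (t - y k) := by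
    rw [sum_upd (fun i s => ∑ m, C i m * s * y m)]
    have e : (∑ m, C k m * y m) * (t - y k)
        = (∑ m, C k m * t * y m) - ∑ m, C k m * (y k) * y m := by
      rw [Finset.sum_mul, ← Finset.sum_sub_distrib]
      exact Finset.sum_congr rfl fun m _ => by ring
    rw [e]; ring
  have e3 : ∑ i, C i k * (Function.update y k t i) * (t - y k)
      = (∑ m, C k m * y m) * (t - y k) + C k k * (t - y k) ^ 2 := by
    rw [sum_upd (fun i s => C i k * s * (t - y k))]
    have e : (∑ m, C k m * y m) * (t - y k) = ∑ m, C m k * (y m) * (t - y k) := by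
      rw [Finset.sum_mul]
      exact Finset.sum_congr rfl fun m _ => by rw [hsym m k]
    rw [e]; ring
  rw [e2, e3]; ring

lemma sumW (C : Fin n → Fin n → ℝ) (hsym : ∀ i j, C i j = C j i) (x y : Fin n → ℝ) :
    ∑ j, y j * Uf C j x = Lf C x y := by
  unfold Uf Lf
  rw [Finset.sum_comm (f := fun i j => C i j * x i * y j)]
  exact Finset.sum_congr rfl fun j _ => by
    rw [Finset.mul_sum]
    exact Finset.sum_congr rfl fun m _ => by rw [hsym j m]; ring

lemma sumU (C : Fin n → Fin n → ℝ) (y : Fin n → ℝ) :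
    ∑ j, y j * Uf C j y = Qf C y := by
  unfold Uf Qf
  exact Finset.sum_congr rfl fun j _ => by
    rw [Finset.mul_sum]
    exact Finset.sum_congr rfl fun m _ => by ring

lemma sumc (c' : Fin n → ℝ) (y : Fin n → ℝ) : ∑ j, y j * c' j = Pf c' y := by
  unfold Pf
  exact Finset.sum_congr rfl fun j _ => by ring

lemma sumCk (C : Fin n → Fin n → ℝ) (hsym : ∀ i j, C i j = C j i) (y : Fin n → ℝ)
    (k : Fin n) : ∑ j, y j * C j k = Uf C k y := by
  unfold Uf
  exact Finset.sum_congr rfl fun j _ => by rw [hsym j k]; ring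

end HamelAux

section DerivAux

/-- derivative of √(quadratic)/quadratic at the base point -/
lemma derivA (a b e d0 d1 d2 t0 : ℝ) (ha : 0 < a) (hd : d0 ≠ 0) :
    HasDerivAt (fun t => Real.sqrt (a + b * (t - t0) + e * (t - t0) ^ 2)
        / (d0 + d1 * (t - t0) + d2 * (t - t0) ^ 2))
      ((b / (2 * Real.sqrt a) * d0 - Real.sqrt a * d1) / d0 ^ 2) t0 := by
  have hs : HasDerivAt (fun t : ℝ => t - t0) 1 t0 := (hasDerivAt_id t0).sub_const t0
  have hq : HasDerivAt (fun t => a + b * (t - t0) + e * (t - t0) ^ 2) b t0 := by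
    have := ((hasDerivAt_const t0 a).add (hs.const_mul b)).add ((hs.pow 2).const_mul e)
    exact this.congr_deriv (by simp)
  have hd' : HasDerivAt (fun t => d0 + d1 * (t - t0) + d2 * (t - t0) ^ 2) d1 t0 := by
    have := ((hasDerivAt_const t0 d0).add (hs.const_mul d1)).add ((hs.pow 2).const_mul d2)
    exact this.congr_deriv (by simp)
  have hne : (fun t => a + b * (t - t0) + e * (t - t0) ^ 2) t0 ≠ 0 := by
    simp [ha.ne']
  have hsq := hq.sqrt hne
  have hdne : (fun t => d0 + d1 * (t - t0) + d2 * (t - t0) ^ 2) t0 ≠ 0 := by simpa using hd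
  have := hsq.div hd' hdne
  exact this.congr_deriv (by simp)

/-- derivative of quadratic/(K·√(quadratic)) at the base point -/
lemma derivB (n0 n1 n2 K a b e t0 : ℝ) (ha : 0 < a) (hK : K ≠ 0) :
    HasDerivAt (fun t => (n0 + n1 * (t - t0) + n2 * (t - t0) ^ 2)
        / (K * Real.sqrt (a + b * (t - t0) + e * (t - t0) ^ 2)))
      ((n1 * (K * Real.sqrt a) - n0 * (K * (b / (2 * Real.sqrt a)))) / (K * Real.sqrt a) ^ 2)
      t0 := by
  have hs : HasDerivAt (fun t : ℝ => t - t0) 1 t0 := (hasDerivAt_id t0).sub_const t0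
  have hq : HasDerivAt (fun t => a + b * (t - t0) + e * (t - t0) ^ 2) b t0 := by
    have := ((hasDerivAt_const t0 a).add (hs.const_mul b)).add ((hs.pow 2).const_mul e)
    exact this.congr_deriv (by simp)
  have hN : HasDerivAt (fun t => n0 + n1 * (t - t0) + n2 * (t - t0) ^ 2) n1 t0 := by
    have := ((hasDerivAt_const t0 n0).add (hs.const_mul n1)).add ((hs.pow 2).const_mul n2)
    exact this.congr_deriv (by simp)
  have hne : (fun t => a + b * (t - t0) + e * (t - t0) ^ 2) t0 ≠ 0 := by simp [ha.ne']
  have hsq := (hq.sqrt hne).const_mul K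
  have hdne : K * Real.sqrt ((fun t => a + b * (t - t0) + e * (t - t0) ^ 2) t0) ≠ 0 := by
    simp only []
    have : Real.sqrt (a + b * (t0 - t0) + e * (t0 - t0) ^ 2) = Real.sqrt a := by norm_num
    rw [this]
    exact mul_ne_zero hK (Real.sqrt_ne_zero'.2 ha)
  have := hN.div hsq (by simpa using hdne)
  exact this.congr_deriv (by simp)

lemma algA (S r hx Q L P U W cj : ℝ) (hr : 0 < r) (hhx : 0 < hx) (hS : S = r ^ 2) :
    ((4 * (2 * W + cj) * Q - 8 * L * U - 4 * P * U) / (2 * r) * (2 * hx)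
        - r * (2 * (2 * W + cj))) / (2 * hx) ^ 2
      = (4 * ((2 * W + cj) * Q - (2 * L + P) * U) * hx - 2 * S * (2 * W + cj))
          / (4 * hx ^ 2 * r) := by
  subst hS; field_simp; ring

lemma algB (r hx Q L P Uk Wk ck S b K : ℝ) (hr : 0 < r) (hhx : 0 < hx)
    (hSdef : S = 4 * hx * Q - 4 * L ^ 2 - 4 * P * L - P ^ 2) (hS : S = r ^ 2)
    (hb : b = 8 * hx * Uk - 8 * L * Wk - 4 * ck * L - 4 * P * Wk - 2 * P * ck)
    (hK : K = 4 * hx ^ 2) :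
    ((16 * Uk * hx - 4 * b) * (K * r) - (8 * Q * hx - 4 * S) * (K * (b / (2 * r))))
        / (K * r) ^ 2 * L
      + ((8 * Uk * hx - 2 * b) * (K * r) - (4 * Q * hx - 2 * S) * (K * (b / (2 * r))))
        / (K * r) ^ 2 * P
      + ((-4 * (2 * Wk + ck) * hx) * (K * r) - (-4 * (2 * L + P) * hx) * (K * (b / (2 * r))))
        / (K * r) ^ 2 * Q
      + ((-4 * (2 * L + P) * hx) * (K * r)) / (K * r) ^ 2 * Uk
      = (4 * ((2 * Wk + ck) * Q - (2 * L + P) * Uk) * hx - 2 * S * (2 * Wk + ck))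
          / (4 * hx ^ 2 * r) := by
  subst hb hK hSdef
  have hQ' : Q = (r ^ 2 + 4 * L ^ 2 + 4 * P * L + P ^ 2) / (4 * hx) := by
    field_simp
    linarith [hS]
  rw [hQ']
  field_simp
  ring

end DerivAux

lemma pdx_formula {n : ℕ} (C : Fin n → Fin n → ℝ) (c' : Fin n → ℝ) (c : ℝ)
    (hsym : ∀ i j, C i j = C j i)
    (h : (Fin n → ℝ) → ℝ)
    (hh : ∀ x, h x = (∑ i, ∑ j, C i j * x i * x j) + (∑ k, c' k * x k) + c)
    (F : (Fin n → ℝ) → (Fin n → ℝ) → ℝ)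
    (hF : ∀ x y, F x y =
      Real.sqrt (4 * h x * (∑ i, ∑ j, C i j * y i * y j)
          - 4 * (∑ i, ∑ j, C i j * x i * y j) ^ 2
          - 4 * (∑ k, c' k * y k) * (∑ i, ∑ j, C i j * x i * y j)
          - (∑ k, c' k * y k) ^ 2) / (2 * h x))
    (x y : Fin n → ℝ) (hx : 0 < h x) (hS : 0 < Sf C c' (h x) x y) (j : Fin n) :
    pdx j F x y = Gf C c' (h x) j x y := by
  have h_upd : ∀ t, h (Function.update x j t)
      = h x + (2 * Uf C j x + c' j) * (t - x j) + C j j * (t - x j) ^ 2 := by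
    intro t
    rw [hh, hh, (Qf_def C (Function.update x j t)).symm, (Qf_def C x).symm,
      (Pf_def c' (Function.update x j t)).symm, (Pf_def c' x).symm,
      Qf_upd C hsym x j t, Pf_upd]
    ring
  have hfun : (fun t => F (Function.update x j t) y)
      = fun t => Real.sqrt (Sf C c' (h x) x y
          + (4 * (2 * Uf C j x + c' j) * Qf C y - 8 * Lf C x y * Uf C j y
              - 4 * Pf c' y * Uf C j y) * (t - x j)
          + (4 * C j j * Qf C y - 4 * (Uf C j y) ^ 2) * (t - x j) ^ 2)
        / (2 * h x + 2 * (2 * Uf C j x + c' j) * (t - x j)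
            + 2 * C j j * (t - x j) ^ 2) := by
    funext t
    rw [hF]
    rw [(Lf_def C (Function.update x j t) y).symm, (Qf_def C y).symm, (Pf_def c' y).symm]
    rw [h_upd t, Lf_updl]
    congr 1
    · congr 1
      unfold Sf
      ring
    · ring
  unfold pdx
  rw [hfun]
  rw [(derivA (Sf C c' (h x) x y)
      (4 * (2 * Uf C j x + c' j) * Qf C y - 8 * Lf C x y * Uf C j y
          - 4 * Pf c' y * Uf C j y)
      (4 * C j j * Qf C y - 4 * (Uf C j y) ^ 2)
      (2 * h x) (2 * (2 * Uf C j x + c' j)) (2 * C j j) (x j) hS (by positivity)).deriv]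
  unfold Gf
  exact algA _ _ _ _ _ _ _ _ _ (Real.sqrt_pos.2 hS) hx (Real.sq_sqrt hS.le).symm

lemma pdy_formula {n : ℕ} (C : Fin n → Fin n → ℝ) (c' : Fin n → ℝ) (c : ℝ)
    (hsym : ∀ i j, C i j = C j i)
    (h : (Fin n → ℝ) → ℝ)
    (hh : ∀ x, h x = (∑ i, ∑ j, C i j * x i * x j) + (∑ k, c' k * x k) + c)
    (F : (Fin n → ℝ) → (Fin n → ℝ) → ℝ)
    (hF : ∀ x y, F x y =
      Real.sqrt (4 * h x * (∑ i, ∑ j, C i j * y i * y j)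
          - 4 * (∑ i, ∑ j, C i j * x i * y j) ^ 2
          - 4 * (∑ k, c' k * y k) * (∑ i, ∑ j, C i j * x i * y j)
          - (∑ k, c' k * y k) ^ 2) / (2 * h x))
    (x y : Fin n → ℝ) (hx : 0 < h x) (hS : 0 < Sf C c' (h x) x y) (k j : Fin n)
    (b0 n0 n1 : ℝ)
    (hb0 : b0 = 8 * h x * Uf C k y - 8 * Lf C x y * Uf C k x - 4 * c' k * Lf C x y
        - 4 * Pf c' y * Uf C k x - 2 * Pf c' y * c' k)
    (hn0 : n0 = 4 * ((2 * Uf C j x + c' j) * Qf C y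
          - (2 * Lf C x y + Pf c' y) * Uf C j y) * h x
        - 2 * Sf C c' (h x) x y * (2 * Uf C j x + c' j))
    (hn1 : n1 = 4 * ((2 * Uf C j x + c' j) * (2 * Uf C k y)
          - ((2 * Uf C k x + c' k) * Uf C j y + (2 * Lf C x y + Pf c' y) * C j k)) * h x
        - 2 * b0 * (2 * Uf C j x + c' j)) :
    pdy k (fun x' y' => pdx j F x' y') x y
      = (n1 * (4 * h x ^ 2 * Real.sqrt (Sf C c' (h x) x y))
          - n0 * (4 * h x ^ 2 * (b0 / (2 * Real.sqrt (Sf C c' (h x) x y)))))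
        / (4 * h x ^ 2 * Real.sqrt (Sf C c' (h x) x y)) ^ 2 := by
  subst hb0 hn0 hn1
  have hSrepr : ∀ t, Sf C c' (h x) x (Function.update y k t)
      = Sf C c' (h x) x y
        + (8 * h x * Uf C k y - 8 * Lf C x y * Uf C k x - 4 * c' k * Lf C x y
            - 4 * Pf c' y * Uf C k x - 2 * Pf c' y * c' k) * (t - y k)
        + (4 * h x * C k k - 4 * (Uf C k x) ^ 2 - 4 * c' k * Uf C k x - (c' k) ^ 2)
            * (t - y k) ^ 2 := by
    intro t
    unfold Sf
    rw [Qf_upd C hsym y k t, Lf_updr C hsym x y k t, Pf_upd]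
    ring
  have hGrepr : ∀ t, Gf C c' (h x) j x (Function.update y k t)
      = ((4 * ((2 * Uf C j x + c' j) * Qf C y
              - (2 * Lf C x y + Pf c' y) * Uf C j y) * h x
            - 2 * Sf C c' (h x) x y * (2 * Uf C j x + c' j))
          + (4 * ((2 * Uf C j x + c' j) * (2 * Uf C k y)
              - ((2 * Uf C k x + c' k) * Uf C j y + (2 * Lf C x y + Pf c' y) * C j k)) * h x
            - 2 * (8 * h x * Uf C k y - 8 * Lf C x y * Uf C k x - 4 * c' k * Lf C x y
                - 4 * Pf c' y * Uf C k x - 2 * Pf c' y * c' k) * (2 * Uf C j x + c' j))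
              * (t - y k)
          + (4 * ((2 * Uf C j x + c' j) * C k k - (2 * Uf C k x + c' k) * C j k) * h x
            - 2 * (4 * h x * C k k - 4 * (Uf C k x) ^ 2 - 4 * c' k * Uf C k x - (c' k) ^ 2)
                * (2 * Uf C j x + c' j)) * (t - y k) ^ 2)
        / (4 * h x ^ 2 * Real.sqrt (Sf C c' (h x) x y
            + (8 * h x * Uf C k y - 8 * Lf C x y * Uf C k x - 4 * c' k * Lf C x y
                - 4 * Pf c' y * Uf C k x - 2 * Pf c' y * c' k) * (t - y k)
            + (4 * h x * C k k - 4 * (Uf C k x) ^ 2 - 4 * c' k * Uf C k x - (c' k) ^ 2)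
                * (t - y k) ^ 2)) := by
    intro t
    unfold Gf
    rw [hSrepr t, Qf_upd C hsym y k t, Lf_updr C hsym x y k t, Pf_upd, Uf_upd C j k y t]
    congr 1
    ring
  have hev : ∀ᶠ t in nhds (y k), 0 < Sf C c' (h x) x (Function.update y k t) := by
    have hc : Continuous (fun t : ℝ => Sf C c' (h x) x y
        + (8 * h x * Uf C k y - 8 * Lf C x y * Uf C k x - 4 * c' k * Lf C x y
            - 4 * Pf c' y * Uf C k x - 2 * Pf c' y * c' k) * (t - y k)
        + (4 * h x * C k k - 4 * (Uf C k x) ^ 2 - 4 * c' k * Uf C k x - (c' k) ^ 2)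
            * (t - y k) ^ 2) := by continuity
    have h0 : (0:ℝ) < Sf C c' (h x) x y
        + (8 * h x * Uf C k y - 8 * Lf C x y * Uf C k x - 4 * c' k * Lf C x y
            - 4 * Pf c' y * Uf C k x - 2 * Pf c' y * c' k) * (y k - y k)
        + (4 * h x * C k k - 4 * (Uf C k x) ^ 2 - 4 * c' k * Uf C k x - (c' k) ^ 2)
            * (y k - y k) ^ 2 := by simpa using hS
    have h2 := (hc.continuousAt (x := y k)).eventually (eventually_gt_nhds h0)
    exact h2.mono fun t ht => by rw [hSrepr t]; exact ht
  have heq : (fun t => pdx j F x (Function.update y k t))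
      =ᶠ[nhds (y k)] fun t => Gf C c' (h x) j x (Function.update y k t) :=
    hev.mono fun t ht => pdx_formula C c' c hsym h hh F hF x (Function.update y k t) hx ht j
  show deriv (fun t => pdx j F x (Function.update y k t)) (y k) = _
  rw [heq.deriv_eq, funext hGrepr]
  exact (derivB _ _ _ (4 * h x ^ 2) (Sf C c' (h x) x y) _ _ (y k) hS (by positivity)).deriv

/-- The new family of metrics satisfies Hamel's equations, hence is projectively flat. -/
theorem stmt4 (n : ℕ) (hn : 1 ≤ n) (C : Fin n → Fin n → ℝ) (c' : Fin n → ℝ) (c : ℝ)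
    (hsym : ∀ i j, C i j = C j i)
    (h : (Fin n → ℝ) → ℝ)
    (hh : ∀ x, h x = (∑ i, ∑ j, C i j * x i * x j) + (∑ k, c' k * x k) + c)
    (F : (Fin n → ℝ) → (Fin n → ℝ) → ℝ)
    (hF : ∀ x y, F x y =
      Real.sqrt (4 * h x * (∑ i, ∑ j, C i j * y i * y j)
          - 4 * (∑ i, ∑ j, C i j * x i * y j) ^ 2
          - 4 * (∑ k, c' k * y k) * (∑ i, ∑ j, C i j * x i * y j)
          - (∑ k, c' k * y k) ^ 2) / (2 * h x)) :
    ∀ x y : Fin n → ℝ, h x > 0 →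
      0 < 4 * h x * (∑ i, ∑ j, C i j * y i * y j)
          - 4 * (∑ i, ∑ j, C i j * x i * y j) ^ 2
          - 4 * (∑ k, c' k * y k) * (∑ i, ∑ j, C i j * x i * y j)
          - (∑ k, c' k * y k) ^ 2 →
      ∀ k, (∑ j, y j * pdy k (fun x' y' => pdx j F x' y') x y) = pdx k F x y := by
  intro x y hxpos hpos k
  have hS : 0 < Sf C c' (h x) x y := by unfold Sf Qf Lf Pf; exact hpos
  have hr : 0 < Real.sqrt (Sf C c' (h x) x y) := Real.sqrt_pos.2 hS
  have hterm : ∀ j, pdy k (fun x' y' => pdx j F x' y') x y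
      = ((4 * ((2 * Uf C j x + c' j) * (2 * Uf C k y)
            - ((2 * Uf C k x + c' k) * Uf C j y + (2 * Lf C x y + Pf c' y) * C j k)) * h x
          - 2 * (8 * h x * Uf C k y - 8 * Lf C x y * Uf C k x - 4 * c' k * Lf C x y - 4 * Pf c' y * Uf C k x - 2 * Pf c' y * c' k) * (2 * Uf C j x + c' j)) * (4 * h x ^ 2 * Real.sqrt (Sf C c' (h x) x y))
        - (4 * ((2 * Uf C j x + c' j) * Qf C y
              - (2 * Lf C x y + Pf c' y) * Uf C j y) * h x
            - 2 * Sf C c' (h x) x y * (2 * Uf C j x + c' j)) * (4 * h x ^ 2 * ((8 * h x * Uf C k y - 8 * Lf C x y * Uf C k x - 4 * c' k * Lf C x y - 4 * Pf c' y * Uf C k x - 2 * Pf c' y * c' k) / (2 * Real.sqrt (Sf C c' (h x) x y)))))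
        / (4 * h x ^ 2 * Real.sqrt (Sf C c' (h x) x y)) ^ 2 :=
    fun j => pdy_formula C c' c hsym h hh F hF x y hxpos hS k j _ _ _ rfl rfl rfl
  rw [pdx_formula C c' c hsym h hh F hF x y hxpos hS k]
  have halg := algB (Real.sqrt (Sf C c' (h x) x y)) (h x) (Qf C y) (Lf C x y) (Pf c' y) (Uf C k y) (Uf C k x)
    (c' k) (Sf C c' (h x) x y) (8 * h x * Uf C k y - 8 * Lf C x y * Uf C k x - 4 * c' k * Lf C x y - 4 * Pf c' y * Uf C k x - 2 * Pf c' y * c' k) (4 * h x ^ 2) hr hxpos rfl (Real.sq_sqrt hS.le).symm rfl rfl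
  calc ∑ j, y j * pdy k (fun x' y' => pdx j F x' y') x y
      = ∑ j, (((16 * Uf C k y * h x - 4 * (8 * h x * Uf C k y - 8 * Lf C x y * Uf C k x - 4 * c' k * Lf C x y - 4 * Pf c' y * Uf C k x - 2 * Pf c' y * c' k)) * (4 * h x ^ 2 * Real.sqrt (Sf C c' (h x) x y)) - (8 * Qf C y * h x - 4 * Sf C c' (h x) x y) * (4 * h x ^ 2 * ((8 * h x * Uf C k y - 8 * Lf C x y * Uf C k x - 4 * c' k * Lf C x y - 4 * Pf c' y * Uf C k x - 2 * Pf c' y * c' k) / (2 * Real.sqrt (Sf C c' (h x) x y))))) / (4 * h x ^ 2 * Real.sqrt (Sf C c' (h x) x y)) ^ 2 * (y j * Uf C j x) + ((8 * Uf C k y * h x - 2 * (8 * h x * Uf C k y - 8 * Lf C x y * Uf C k x - 4 * c' k * Lf C x y - 4 * Pf c' y * Uf C k x - 2 * Pf c' y * c' k)) * (4 * h x ^ 2 * Real.sqrt (Sf C c' (h x) x y)) - (4 * Qf C y * h x - 2 * Sf C c' (h x) x y) * (4 * h x ^ 2 * ((8 * h x * Uf C k y - 8 * Lf C x y * Uf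 C k x - 4 * c' k * Lf C x y - 4 * Pf c' y * Uf C k x - 2 * Pf c' y * c' k) / (2 * Real.sqrt (Sf C c' (h x) x y))))) / (4 * h x ^ 2 * Real.sqrt (Sf C c' (h x) x y)) ^ 2 * (y j * c' j)
          + ((-4 * (2 * Uf C k x + c' k) * h x) * (4 * h x ^ 2 * Real.sqrt (Sf C c' (h x) x y)) - (-4 * (2 * Lf C x y + Pf c' y) * h x) * (4 * h x ^ 2 * ((8 * h x * Uf C k y - 8 * Lf C x y * Uf C k x - 4 * c' k * Lf C x y - 4 * Pf c' y * Uf C k x - 2 * Pf c' y * c' k) / (2 * Real.sqrt (Sf C c' (h x) x y))))) / (4 * h x ^ 2 * Real.sqrt (Sf C c' (h x) x y)) ^ 2 * (y j * Uf C j y) + ((-4 * (2 * Lf C x y + Pf c' y) * h x) * (4 * h x ^ 2 * Real.sqrt (Sf C c' (h x) x y))) / (4 * h x ^ 2 * Real.sqrt (Sf C c' (h x) x y)) ^ 2 * (y j * C j k)) :=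
        Finset.sum_congr rfl fun j _ => by rw [hterm j]; ring
    _ = ((16 * Uf C k y * h x - 4 * (8 * h x * Uf C k y - 8 * Lf C x y * Uf C k x - 4 * c' k * Lf C x y - 4 * Pf c' y * Uf C k x - 2 * Pf c' y * c' k)) * (4 * h x ^ 2 * Real.sqrt (Sf C c' (h x) x y)) - (8 * Qf C y * h x - 4 * Sf C c' (h x) x y) * (4 * h x ^ 2 * ((8 * h x * Uf C k y - 8 * Lf C x y * Uf C k x - 4 * c' k * Lf C x y - 4 * Pf c' y * Uf C k x - 2 * Pf c' y * c' k) / (2 * Real.sqrt (Sf C c' (h x) x y))))) / (4 * h x ^ 2 * Real.sqrt (Sf C c' (h x) x y)) ^ 2 * (∑ j, y j * Uf C j x) + ((8 * Uf C k y * h x - 2 * (8 * h x * Uf C k y - 8 * Lf C x y * Uf C k x - 4 * c' k * Lf C x y - 4 * Pf c' y * Uf C k x - 2 * Pf c' y * c' k)) * (4 * h x ^ 2 * Real.sqrt (Sf C c' (h x) x y)) - (4 * Qf C y * h x - 2 * Sf C c' (h x) x y) * (4 * h x ^ 2 * ((8 * h x * Uf C k y - 8 * Lf C x y * Uf C k x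 - 4 * c' k * Lf C x y - 4 * Pf c' y * Uf C k x - 2 * Pf c' y * c' k) / (2 * Real.sqrt (Sf C c' (h x) x y))))) / (4 * h x ^ 2 * Real.sqrt (Sf C c' (h x) x y)) ^ 2 * (∑ j, y j * c' j)
          + ((-4 * (2 * Uf C k x + c' k) * h x) * (4 * h x ^ 2 * Real.sqrt (Sf C c' (h x) x y)) - (-4 * (2 * Lf C x y + Pf c' y) * h x) * (4 * h x ^ 2 * ((8 * h x * Uf C k y - 8 * Lf C x y * Uf C k x - 4 * c' k * Lf C x y - 4 * Pf c' y * Uf C k x - 2 * Pf c' y * c' k) / (2 * Real.sqrt (Sf C c' (h x) x y))))) / (4 * h x ^ 2 * Real.sqrt (Sf C c' (h x) x y)) ^ 2 * (∑ j, y j * Uf C j y) + ((-4 * (2 * Lf C x y + Pf c' y) * h x) * (4 * h x ^ 2 * Real.sqrt (Sf C c' (h x) x y))) / (4 * h x ^ 2 * Real.sqrt (Sf C c' (h x) x y)) ^ 2 * (∑ j, y j * C j k) := by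
        simp only [Finset.sum_add_distrib, ← Finset.mul_sum]
    _ = ((16 * Uf C k y * h x - 4 * (8 * h x * Uf C k y - 8 * Lf C x y * Uf C k x - 4 * c' k * Lf C x y - 4 * Pf c' y * Uf C k x - 2 * Pf c' y * c' k)) * (4 * h x ^ 2 * Real.sqrt (Sf C c' (h x) x y)) - (8 * Qf C y * h x - 4 * Sf C c' (h x) x y) * (4 * h x ^ 2 * ((8 * h x * Uf C k y - 8 * Lf C x y * Uf C k x - 4 * c' k * Lf C x y - 4 * Pf c' y * Uf C k x - 2 * Pf c' y * c' k) / (2 * Real.sqrt (Sf C c' (h x) x y))))) / (4 * h x ^ 2 * Real.sqrt (Sf C c' (h x) x y)) ^ 2 * Lf C x y + ((8 * Uf C k y * h x - 2 * (8 * h x * Uf C k y - 8 * Lf C x y * Uf C k x - 4 * c' k * Lf C x y - 4 * Pf c' y * Uf C k x - 2 * Pf c' y * c' k)) * (4 * h x ^ 2 * Real.sqrt (Sf C c' (h x) x y)) - (4 * Qf C y * h x - 2 * Sf C c' (h x) x y) * (4 * h x ^ 2 * ((8 * h x * Uf C k y - 8 * Lf C x y * Uf C k x - 4 * c' k * Lf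 C x y - 4 * Pf c' y * Uf C k x - 2 * Pf c' y * c' k) / (2 * Real.sqrt (Sf C c' (h x) x y))))) / (4 * h x ^ 2 * Real.sqrt (Sf C c' (h x) x y)) ^ 2 * Pf c' y + ((-4 * (2 * Uf C k x + c' k) * h x) * (4 * h x ^ 2 * Real.sqrt (Sf C c' (h x) x y)) - (-4 * (2 * Lf C x y + Pf c' y) * h x) * (4 * h x ^ 2 * ((8 * h x * Uf C k y - 8 * Lf C x y * Uf C k x - 4 * c' k * Lf C x y - 4 * Pf c' y * Uf C k x - 2 * Pf c' y * c' k) / (2 * Real.sqrt (Sf C c' (h x) x y))))) / (4 * h x ^ 2 * Real.sqrt (Sf C c' (h x) x y)) ^ 2 * Qf C y + ((-4 * (2 * Lf C x y + Pf c' y) * h x) * (4 * h x ^ 2 * Real.sqrt (Sf C c' (h x) x y))) / (4 * h x ^ 2 * Real.sqrt (Sf C c' (h x) x y)) ^ 2 * Uf C k y := by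
        rw [sumW C hsym x y, sumU C y, sumc c' y, sumCk C hsym y k]
    _ = Gf C c' (h x) k x y := by unfold Gf; exact halg
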